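/- Let f : ℝⁿ → ℝ be twice continuously differentiable, Φ(y) := f(y²), y ∈ ℝⁿ, x := y², and I = {i : yᵢ ≠ 0}. Then the following are equivalent: (i) ∇Φ(y) = 0 and ⟨w, ∇²Φ(y) w⟩ ≥ 0 for all w with w_I = 0; (ii) x is a KKT point of min{f(x) : x ≥ 0}, i.e. x ≥ 0, ∇f(x)ᵢ = 0 for all i ∈ I, and ∇f(x)ᵢ ≥ 0 for all i ∉ I. -/

import Mathlib

open scoped RealInnerProductSpace

/-- Componentwise (Hadamard) product on `EuclideanSpace ℝ (Fin n)`. -/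
noncomputable def had {n : ℕ} (x y : EuclideanSpace ℝ (Fin n)) : EuclideanSpace ℝ (Fin n) :=
  (WithLp.equiv 2 (Fin n → ℝ)).symm (fun i => x i * y i)

abbrev E' (n : ℕ) := EuclideanSpace ℝ (Fin n)

section aux
variable {n : ℕ}

lemma had_apply (x y : EuclideanSpace ℝ (Fin n)) (i : Fin n) : had x y i = x i * y i := rfl

lemma had_norm_le (x y : EuclideanSpace ℝ (Fin n)) : ‖had x y‖ ≤ ‖x‖ * ‖y‖ := by
  have h1 : ∀ z : EuclideanSpace ℝ (Fin n), ‖z‖ = Real.sqrt (∑ i, z i ^ 2) := by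
    intro z
    rw [EuclideanSpace.norm_eq]
    congr 1
    refine Finset.sum_congr rfl fun i _ => ?_
    rw [Real.norm_eq_abs, sq_abs]
  rw [h1, h1, h1, ← Real.sqrt_mul (by positivity)]
  apply Real.sqrt_le_sqrt
  calc ∑ i, had x y i ^ 2 = ∑ i, x i ^ 2 * y i ^ 2 := by
        refine Finset.sum_congr rfl fun i _ => ?_; rw [had_apply, mul_pow]
    _ ≤ ∑ i, (∑ j, x j ^ 2) * y i ^ 2 := by
        refine Finset.sum_le_sum fun i _ => ?_
        exact mul_le_mul_of_nonneg_right
          (Finset.single_le_sum (fun j _ => sq_nonneg (x j)) (Finset.mem_univ i)) (sq_nonneg _)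
    _ = (∑ j, x j ^ 2) * ∑ i, y i ^ 2 := by rw [← Finset.mul_sum]

lemma had_bilin :
    IsBoundedBilinearMap ℝ (fun p : EuclideanSpace ℝ (Fin n) × EuclideanSpace ℝ (Fin n) =>
      had p.1 p.2) where
  add_left x₁ x₂ y := by ext i; simp [had_apply, add_mul]
  smul_left c x y := by ext i; simp [had_apply]; ring
  add_right x y₁ y₂ := by ext i; simp [had_apply, mul_add]
  smul_right c x y := by ext i; simp [had_apply]; ring
  bound := ⟨1, one_pos, fun x y => by simpa using had_norm_le x y⟩

end aux

theorem stmt14 {n : ℕ} (f : EuclideanSpace ℝ (Fin n) → ℝ) (hf : ContDiff ℝ 2 f)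
    (Φ : EuclideanSpace ℝ (Fin n) → ℝ) (hΦ : ∀ z, Φ z = f (had z z))
    (y x : EuclideanSpace ℝ (Fin n)) (hx : x = had y y) :
    (gradient Φ y = 0 ∧
      ∀ w : EuclideanSpace ℝ (Fin n), (∀ i, y i ≠ 0 → w i = 0) →
        0 ≤ fderiv ℝ (fun z => fderiv ℝ Φ z w) y w) ↔
    ((∀ i, 0 ≤ x i) ∧ (∀ i, y i ≠ 0 → gradient f x i = 0) ∧
      (∀ i, y i = 0 → 0 ≤ gradient f x i)) := by
  classical
  have hb : IsBoundedBilinearMap ℝ (fun p : E' n × E' n => had p.1 p.2) := had_bilin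
  -- derivative of squaring map
  set D : E' n → (E' n →L[ℝ] E' n) := fun z =>
    (hb.deriv (z, z)).comp ((ContinuousLinearMap.id ℝ (E' n)).prod (ContinuousLinearMap.id ℝ (E' n))) with hD
  have hDapp : ∀ z v : E' n, D z v = had z v + had v z := fun z v => by
    simp [hD, hb.deriv_apply]
  have hsq : ∀ z : E' n, HasFDerivAt (fun z : E' n => had z z) (D z) z := by
    intro z
    have h : HasFDerivAt ((fun p : E' n × E' n => had p.1 p.2) ∘ fun z : E' n => (z, z)) (D z) z :=
      HasFDerivAt.comp z (hb.hasFDerivAt (z, z)) ((hasFDerivAt_id z).prodMk (hasFDerivAt_id z))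
    exact h
  have hfd : Differentiable ℝ f := hf.differentiable (by norm_num)
  have hΦf : Φ = fun z => f (had z z) := funext hΦ
  have hΦderiv : ∀ z : E' n, HasFDerivAt Φ ((fderiv ℝ f (had z z)).comp (D z)) z := by
    intro z
    rw [hΦf]
    have h : HasFDerivAt (f ∘ fun z : E' n => had z z)
        ((fderiv ℝ f (had z z)).comp (D z)) z :=
      HasFDerivAt.comp z (hfd (had z z)).hasFDerivAt (hsq z)
    exact h
  set gf := gradient f x with hgf
  have hinner : ∀ v : E' n, fderiv ℝ f x v = ∑ i, gf i * v i := by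
    intro v
    have h1 := (hfd x).hasGradientAt
    have h2 : fderiv ℝ f x = InnerProductSpace.toDual ℝ (E' n) gf :=
      ((hfd x).hasFDerivAt).unique h1.hasFDerivAt
    rw [h2]
    simp [InnerProductSpace.toDual_apply_apply, PiLp.inner_apply, RCLike.inner_apply, mul_comm]
  -- gradient of Φ characterization
  have hgradΦ : gradient Φ y = 0 ↔ ∀ i, y i * gf i = 0 := by
    have hΦfd : fderiv ℝ Φ y = (fderiv ℝ f x).comp (D y) := by
      rw [hx]; exact (hΦderiv y).fderiv
    have hgr : gradient Φ y = (InnerProductSpace.toDual ℝ (E' n)).symm (fderiv ℝ Φ y) := rfl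
    constructor
    · intro h i
      have h0 : fderiv ℝ Φ y = 0 := by
        have h' := h
        rw [hgr, LinearIsometryEquiv.map_eq_zero_iff] at h'
        exact h'
      have := congrFun (congrArg (fun L : E' n →L[ℝ] ℝ => (L : E' n → ℝ)) (hΦfd ▸ h0))
        (EuclideanSpace.single i 1)
      simp only [ContinuousLinearMap.comp_apply, ContinuousLinearMap.zero_apply] at this
      rw [hinner] at this
      have hsum : ∑ j, gf j * (D y (EuclideanSpace.single i 1)) j = 2 * (y i * gf i) := by
        rw [Finset.sum_eq_single i]
        · rw [hDapp]
          simp [had_apply, EuclideanSpace.single_apply]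
          ring
        · intro j _ hj
          rw [hDapp]
          simp [had_apply, EuclideanSpace.single_apply, hj]
        · simp
      rw [hsum] at this
      linarith
    · intro h
      rw [hgr]
      have h0 : fderiv ℝ Φ y = 0 := by
        rw [hΦfd]
        ext v
        simp only [ContinuousLinearMap.comp_apply, ContinuousLinearMap.zero_apply]
        rw [hinner]
        refine Finset.sum_eq_zero fun j _ => ?_
        rw [hDapp]
        simp only [PiLp.add_apply, had_apply]
        have hj := h j
        have hcalc : gf j * (y j * v j + v j * y j) = 2 * v j * (y j * gf j) := by ring
        rw [hcalc, hj, mul_zero]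
      rw [h0]
      simp
  -- second derivative formula
  have hsecond : ∀ w : E' n, (∀ i, y i ≠ 0 → w i = 0) →
      fderiv ℝ (fun z => fderiv ℝ Φ z w) y w = 2 * ∑ i, gf i * w i ^ 2 := by
    intro w hw
    have hyw : had y w = 0 := by
      ext i
      by_cases hyi : y i = 0
      · simp [had_apply, hyi]
      · simp [had_apply, hw i hyi]
    have hwy : had w y = 0 := by
      ext i; by_cases hyi : y i = 0
      · simp [had_apply, hyi]
      · simp [had_apply, hw i hyi]
    -- the function equals z ↦ (fderiv f (had z z)) (D z w)
    have hFeq : (fun z => fderiv ℝ Φ z w) = fun z => (fderiv ℝ f (had z z)) (D z w) := by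
      funext z
      rw [(hΦderiv z).fderiv]
      rfl
    rw [hFeq]
    -- A z = fderiv f (had z z), B z = D z w
    have hf' : ContDiff ℝ 1 (fderiv ℝ f) := hf.fderiv_right (le_refl _)
    have hA : HasFDerivAt (fun z : E' n => fderiv ℝ f (had z z))
        ((fderiv ℝ (fderiv ℝ f) x).comp (D y)) y := by
      have h : HasFDerivAt ((fderiv ℝ f) ∘ fun z : E' n => had z z)
          ((fderiv ℝ (fderiv ℝ f) (had y y)).comp (D y)) y :=
        HasFDerivAt.comp y ((hf'.differentiable one_ne_zero) (had y y)).hasFDerivAt (hsq y)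
      rw [hx]
      exact h
    set Bclm : E' n →L[ℝ] E' n := hb.toContinuousLinearMap.flip w + hb.toContinuousLinearMap w with hB
    have hBapp : ∀ z : E' n, Bclm z = D z w := by
      intro z
      rw [hDapp]
      simp [hB]
    have hBd : HasFDerivAt (fun z : E' n => D z w) Bclm y := by
      have : (fun z : E' n => D z w) = fun z => Bclm z := funext fun z => (hBapp z).symm
      rw [this]
      exact Bclm.hasFDerivAt
    have happ : IsBoundedBilinearMap ℝ (fun p : (E' n →L[ℝ] ℝ) × E' n => p.1 p.2) :=
      isBoundedBilinearMap_apply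
    have hcomp : HasFDerivAt (fun z : E' n => (fderiv ℝ f (had z z)) (D z w))
        ((happ.deriv (fderiv ℝ f (had y y), D y w)).comp
          (((fderiv ℝ (fderiv ℝ f) x).comp (D y)).prod Bclm)) y := by
      have h : HasFDerivAt ((fun p : (E' n →L[ℝ] ℝ) × E' n => p.1 p.2) ∘
          fun z : E' n => (fderiv ℝ f (had z z), D z w))
          ((happ.deriv (fderiv ℝ f (had y y), D y w)).comp
            (((fderiv ℝ (fderiv ℝ f) x).comp (D y)).prod Bclm)) y :=
        HasFDerivAt.comp y (happ.hasFDerivAt (fderiv ℝ f (had y y), D y w)) (hA.prodMk hBd)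
      exact h
    rw [hcomp.fderiv]
    have hDyw : D y w = 0 := by rw [hDapp, hyw, hwy, add_zero]
    simp only [ContinuousLinearMap.comp_apply, ContinuousLinearMap.prod_apply,
      happ.deriv_apply, hDyw]
    rw [← hx]
    rw [hBapp w, hDapp]
    have : fderiv ℝ f x (had w w + had w w) = ∑ i, gf i * (had w w + had w w) i := hinner _
    rw [this]
    simp only [map_zero, ContinuousLinearMap.zero_apply, add_zero]
    rw [Finset.mul_sum]
    refine Finset.sum_congr rfl fun i _ => ?_
    simp only [PiLp.add_apply, had_apply]
    ring
  constructor
  · rintro ⟨h1, h2⟩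
    refine ⟨fun i => by rw [hx]; exact mul_self_nonneg (y i), ?_, ?_⟩
    · intro i hyi
      have := (hgradΦ.mp h1) i
      exact (mul_eq_zero.mp this).resolve_left hyi
    · intro i hyi
      have hw : ∀ j, y j ≠ 0 → (EuclideanSpace.single i (1:ℝ)) j = 0 := by
        intro j hyj
        rcases eq_or_ne j i with rfl | hji
        · exact absurd hyi hyj
        · simp [EuclideanSpace.single_apply, hji]
      have := h2 _ hw
      rw [hsecond _ hw] at this
      have hsum : ∑ j, gf j * (EuclideanSpace.single i (1:ℝ)) j ^ 2 = gf i := by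
        rw [Finset.sum_eq_single i]
        · simp
        · intro j _ hj; simp [EuclideanSpace.single_apply, hj]
        · simp
      rw [hsum] at this
      linarith
  · rintro ⟨_, h2, h3⟩
    constructor
    · rw [hgradΦ]
      intro i
      by_cases hyi : y i = 0
      · rw [hyi, zero_mul]
      · rw [h2 i hyi, mul_zero]
    · intro w hw
      rw [hsecond w hw]
      have : (0:ℝ) ≤ ∑ i, gf i * w i ^ 2 := by
        refine Finset.sum_nonneg fun i _ => ?_
        by_cases hwi : w i = 0
        · rw [hwi]; simp
        · have hyi : y i = 0 := by by_contra hyi; exact hwi (hw i hyi)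
          exact mul_nonneg (h3 i hyi) (sq_nonneg _)
      linarith
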